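/- Let (M, ℬ, μ, f) be a measure-preserving system and {U_n} a nested sequence of measurable sets with μ(U_n) > 0 and μ(U_n) → 0. Assume that for every ℓ ≥ 1 and every sufficiently large K the limit α̂_ℓ(K) = lim_{n→∞} μ_{U_n}(τ_{U_n}^{ℓ−1} ≤ K) exists, set α̂_ℓ = lim_{K→∞} α̂_ℓ(K), and assume Σ_{ℓ≥1} ℓ·α̂_ℓ < ∞. For K ≥ 1 write Z_n^{K,−}(x) = Σ_{i=0}^{K−1} 1_{U_n}(f^i(x)) and Z_n^{K,+}(x) = Σ_{i=K}^{2K} 1_{U_n}(f^i(x)). Then for every η > 0 and every ℓ ≥ 1 there exists K₀ such that for every K ≥ K₀ there exists n₀ with: for all n ≥ n₀ and all integers 0 ≤ k, k' < ℓ, |μ({x : Z_n^{K,−}(x) = k, Z_n^{K,+}(x) = ℓ − k, f^K(x) ∈ U_n}) − μ({x : Z_n^{K,−}(x) = k', Z_n^{K,+}(x) = ℓ − k', f^K(x) ∈ U_n})| ≤ η·μ(U_n). -/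

import Mathlib

open MeasureTheory Filter Topology
open Finset
open scoped Classical

/-- The number of returns to `U` within time `K`: `Σ_{i=1}^{K} 1_U(f^i x)`. -/
noncomputable def retCount {M : Type*} (f : M → M) (U : Set M) (K : ℕ) (x : M) : ℕ :=
  ∑ i ∈ Finset.Icc 1 K, U.indicator (fun _ => 1) (f^[i] x)

/-- The conditional probability `μ_U(τ_U^{ℓ-1} ≤ K)` of having at least `ℓ-1` returns
to `U` within time `K`, given being in `U`. -/
noncomputable def condRet {M : Type*} [MeasurableSpace M] (μ : Measure M)
    (f : M → M) (U : Set M) (K ℓ : ℕ) : ℝ :=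
  (μ (U ∩ {x | ℓ - 1 ≤ retCount f U K x})).toReal / (μ U).toReal

/-- `Z^{K,-} = Σ_{i=0}^{K-1} 1_U(f^i x)`, the number of entries before the center time. -/
noncomputable def Zminus {M : Type*} (f : M → M) (U : Set M) (K : ℕ) (x : M) : ℕ :=
  ∑ i ∈ Finset.range K, U.indicator (fun _ => 1) (f^[i] x)

/-- `Z^{K,+} = Σ_{i=K}^{2K} 1_U(f^i x)`, the number of entries at or after the center time. -/
noncomputable def Zplus {M : Type*} (f : M → M) (U : Set M) (K : ℕ) (x : M) : ℕ :=
  ∑ i ∈ Finset.Icc K (2 * K), U.indicator (fun _ => 1) (f^[i] x)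

noncomputable def cnt {M : Type*} (f : M → M) (V : Set M) (W : Finset ℕ) (x : M) : ℕ :=
  (W.filter (fun i => f^[i] x ∈ V)).card

lemma cnt_shift {M : Type*} (f : M → M) (V : Set M) (W : Finset ℕ) (s : ℕ) (x : M) :
    cnt f V W (f^[s] x) = cnt f V (W.image (· + s)) x := by
  unfold cnt
  rw [Finset.filter_image, Finset.card_image_of_injective _ (add_left_injective s)]
  congr 1
  exact Finset.filter_congr fun i _ => by rw [Function.iterate_add_apply]

lemma cnt_union {M : Type*} (f : M → M) (V : Set M) {W₁ W₂ : Finset ℕ} (h : Disjoint W₁ W₂)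
    (x : M) : cnt f V (W₁ ∪ W₂) x = cnt f V W₁ x + cnt f V W₂ x := by
  unfold cnt
  rw [Finset.filter_union, Finset.card_union_of_disjoint (Finset.disjoint_filter_filter h)]

lemma cnt_eq_of {M : Type*} (f : M → M) (V : Set M) {W W₁ W₂ : Finset ℕ}
    (h : W = W₁ ∪ W₂) (hd : Disjoint W₁ W₂) (x : M) :
    cnt f V W x = cnt f V W₁ x + cnt f V W₂ x := h ▸ cnt_union f V hd x

lemma cnt_eq_zero {M : Type*} {f : M → M} {V : Set M} {W : Finset ℕ} {x : M} :
    cnt f V W x = 0 ↔ ∀ i ∈ W, f^[i] x ∉ V := by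
  simp [cnt, Finset.card_eq_zero, Finset.filter_eq_empty_iff]

lemma cnt_singleton {M : Type*} (f : M → M) (V : Set M) (i : ℕ) (x : M) (h : f^[i] x ∈ V) :
    cnt f V {i} x = 1 := by
  simp [cnt, Finset.filter_singleton, h]

lemma measurable_cnt {M : Type*} [MeasurableSpace M] {f : M → M} (hfm : Measurable f)
    {V : Set M} (hV : MeasurableSet V) (W : Finset ℕ) : Measurable (cnt f V W) := by
  have : (cnt f V W) = fun x => ∑ i ∈ W, if f^[i] x ∈ V then 1 else 0 := by
    funext x; rw [cnt, Finset.card_filter]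
  rw [this]
  exact Finset.measurable_sum _ fun i _ =>
    Measurable.ite ((hfm.iterate i) hV) measurable_const measurable_const

/-- the basic event: split (k, ℓ-k) with an entry at the center K -/
def Bset {M : Type*} (f : M → M) (V : Set M) (K ℓ k : ℕ) : Set M :=
  {x | cnt f V (range K) x = k ∧ cnt f V (Icc K (2*K)) x = ℓ - k ∧ f^[K] x ∈ V}

def Pset {M : Type*} (f : M → M) (V : Set M) (K ℓ k s : ℕ) : Set M :=
  Bset f V K ℓ k ∩ {x | f^[K+s] x ∈ V ∧ cnt f V (range s) x = 0 ∧
    cnt f V (Ioo K (K+s)) x = 0 ∧ cnt f V (Ioc (2*K) (2*K+s)) x = 0}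

def Qset {M : Type*} (f : M → M) (V : Set M) (K ℓ k s : ℕ) : Set M :=
  Bset f V K ℓ (k+1) ∩ {x | f^[K-s] x ∈ V ∧ cnt f V (Ioo (K-s) K) x = 0}

def BadS {M : Type*} (f : M → M) (V : Set M) (K : ℕ) : Set M :=
  {x | f^[K] x ∈ V ∧ ∃ g ∈ Icc (K/2+1) K, f^[K-g] x ∈ V} ∪
  {x | f^[K] x ∈ V ∧ ∃ g ∈ Icc (K/2+1) (2*K), f^[K+g] x ∈ V}

section comb
variable {M : Type*} {f : M → M} {V : Set M} {K ℓ k s : ℕ}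

lemma to_badL_or_R (hs1 : 1 ≤ s) (hsK : s ≤ K) {x : M} {t : ℕ}
    (hcK : f^[K] x ∈ V) (hKs : f^[K+s] x ∈ V) (ht : t < s) (het : f^[t] x ∈ V) :
    x ∈ BadS f V K := by
  by_cases hbig : K/2 + 1 ≤ s
  · exact Or.inr ⟨hcK, s, Finset.mem_Icc.2 ⟨hbig, by omega⟩, hKs⟩
  · refine Or.inl ⟨hcK, K - t, Finset.mem_Icc.2 ⟨by omega, by omega⟩, ?_⟩
    have : K - (K - t) = t := by omega
    rw [this]; exact het

lemma to_badR (hsK : s ≤ K) {x : M} {u : ℕ}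
    (hcK : f^[K] x ∈ V) (hu1 : 2*K < u) (hu2 : u ≤ 2*K + s) (heu : f^[u] x ∈ V) :
    x ∈ BadS f V K := by
  refine Or.inr ⟨hcK, u - K, Finset.mem_Icc.2 ⟨by omega, by omega⟩, ?_⟩
  have : K + (u - K) = u := by omega
  rw [this]; exact heu

-- window identities
lemma w1 (hs1 : 1 ≤ s) (hsK : s ≤ K) : (range K).image (· + s) = Icc s (K-1) ∪ ({K} ∪ Ioo K (K+s)) := by
  ext i
  simp only [Finset.mem_image, Finset.mem_range, Finset.mem_union, Finset.mem_Icc,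
    Finset.mem_singleton, Finset.mem_Ioo]
  constructor
  · rintro ⟨j, hj, rfl⟩; omega
  · intro h; exact ⟨i - s, by omega, by omega⟩

lemma w3 (hs1 : 1 ≤ s) (hsK : s ≤ K) : range K = range s ∪ Icc s (K-1) := by
  ext i
  simp only [Finset.mem_range, Finset.mem_union, Finset.mem_Icc]
  omega

lemma w4 (hs1 : 1 ≤ s) (hsK : s ≤ K) :
    Icc K (2*K) = {K} ∪ (Ioo K (K+s) ∪ Icc (K+s) (2*K)) := by
  ext i
  simp only [Finset.mem_Icc, Finset.mem_union, Finset.mem_singleton, Finset.mem_Ioo]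
  omega

lemma w5 (hsK : s ≤ K) : (Icc K (2*K)).image (· + s) = Icc (K+s) (2*K) ∪ Ioc (2*K) (2*K+s) := by
  ext i
  simp only [Finset.mem_image, Finset.mem_Icc, Finset.mem_union, Finset.mem_Ioc]
  constructor
  · rintro ⟨j, hj, rfl⟩; omega
  · intro h; exact ⟨i - s, by omega, by omega⟩

lemma w7 (hsK : s ≤ K) : (Ioo (K-s) K).image (· + s) = Ioo K (K+s) := by
  ext i
  simp only [Finset.mem_image, Finset.mem_Ioo]
  constructor
  · rintro ⟨j, hj, rfl⟩; omega
  · intro h; exact ⟨i - s, by omega, by omega⟩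

lemma P_mapsto_Q (hs1 : 1 ≤ s) (hsK : s ≤ K) (hkl : k + 2 ≤ ℓ) {x : M}
    (hx : x ∈ Pset f V K ℓ k s) : f^[s] x ∈ Qset f V K ℓ k s := by
  obtain ⟨⟨hm, hp, hc⟩, hKs, h0, hoo, hoc⟩ := hx
  have d1 : Disjoint (Icc s (K-1)) ({K} ∪ Ioo K (K+s)) := by
    simp [Finset.disjoint_left]; omega
  have d2 : Disjoint ({K} : Finset ℕ) (Ioo K (K+s)) := by
    simp [Finset.disjoint_left]
  have d3 : Disjoint (range s) (Icc s (K-1)) := by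
    simp [Finset.disjoint_left]; omega
  have d5 : Disjoint (Icc (K+s) (2*K)) (Ioc (2*K) (2*K+s)) := by
    simp [Finset.disjoint_left]; omega
  have d4 : Disjoint ({K} : Finset ℕ) (Ioo K (K+s) ∪ Icc (K+s) (2*K)) := by
    simp [Finset.disjoint_left]; omega
  have d6 : Disjoint (Ioo K (K+s)) (Icc (K+s) (2*K)) := by
    simp [Finset.disjoint_left]; omega
  -- count over [s, K-1]
  have hmid : cnt f V (Icc s (K-1)) x = k := by
    have := cnt_eq_of f V (w3 hs1 hsK) d3 x
    omega
  -- count over [K+s, 2K]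
  have hIcc : 1 + (cnt f V (Ioo K (K+s)) x + cnt f V (Icc (K+s) (2*K)) x) = ℓ - k := by
    have e1 := cnt_eq_of f V (w4 hs1 hsK) d4 x
    have e2 := cnt_union f V d6 x
    rw [cnt_singleton f V K x hc] at e1
    omega
  have hback : cnt f V (Icc (K+s) (2*K)) x = ℓ - (k+1) := by omega
  refine ⟨⟨?_, ?_, ?_⟩, ?_, ?_⟩
  · rw [cnt_shift, cnt_eq_of f V (w1 hs1 hsK) d1, cnt_union f V d2,
      cnt_singleton f V K x hc, hmid, hoo]
  · rw [cnt_shift, cnt_eq_of f V (w5 hsK) d5, hback, hoc]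
    omega
  · rw [← Function.iterate_add_apply]; exact hKs

  · have : K - s + s = K := by omega
    rw [← Function.iterate_add_apply, this]; exact hc
  · rw [cnt_shift, w7 hsK, hoo]

lemma preQ_subset (hs1 : 1 ≤ s) (hsK : s ≤ K) (hkl : k + 2 ≤ ℓ) {x : M}
    (hx : f^[s] x ∈ Qset f V K ℓ k s) : x ∈ Pset f V K ℓ k s ∪ BadS f V K := by
  obtain ⟨⟨hm, hp, hcQ⟩, hKsQ, hooQ⟩ := hx
  -- translate Q facts to x
  have hcx : f^[K] x ∈ V := by
    have : K - s + s = K := by omega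
    rwa [← Function.iterate_add_apply, this] at hKsQ
  have hKsx : f^[K+s] x ∈ V := by
    rwa [← Function.iterate_add_apply] at hcQ
  have hoox : cnt f V (Ioo K (K+s)) x = 0 := by
    rw [cnt_shift, w7 hsK] at hooQ; exact hooQ
  by_cases h0 : cnt f V (range s) x = 0
  · by_cases hoc : cnt f V (Ioc (2*K) (2*K+s)) x = 0
    · left
      have d1 : Disjoint (Icc s (K-1)) ({K} ∪ Ioo K (K+s)) := by
        simp [Finset.disjoint_left]; omega
      have d2 : Disjoint ({K} : Finset ℕ) (Ioo K (K+s)) := by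
        simp [Finset.disjoint_left]
      have d3 : Disjoint (range s) (Icc s (K-1)) := by
        simp [Finset.disjoint_left]; omega
      have d5 : Disjoint (Icc (K+s) (2*K)) (Ioc (2*K) (2*K+s)) := by
        simp [Finset.disjoint_left]; omega
      have d4 : Disjoint ({K} : Finset ℕ) (Ioo K (K+s) ∪ Icc (K+s) (2*K)) := by
        simp [Finset.disjoint_left]; omega
      have d6 : Disjoint (Ioo K (K+s)) (Icc (K+s) (2*K)) := by
        simp [Finset.disjoint_left]; omega
      have hm' : cnt f V (Icc s (K-1)) x + 1 = k + 1 := by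
        rw [cnt_shift, cnt_eq_of f V (w1 hs1 hsK) d1, cnt_union f V d2,
          cnt_singleton f V K x hcx, hoox] at hm
        omega
      have hp' : cnt f V (Icc (K+s) (2*K)) x = ℓ - (k+1) := by
        rw [cnt_shift, cnt_eq_of f V (w5 hsK) d5, hoc] at hp
        omega
      have hrange : cnt f V (range K) x = k := by
        have := cnt_eq_of f V (w3 hs1 hsK) d3 x
        omega
      have hIcc : cnt f V (Icc K (2*K)) x = ℓ - k := by
        have e1 := cnt_eq_of f V (w4 hs1 hsK) d4 x
        have e2 := cnt_union f V d6 x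
        rw [cnt_singleton f V K x hcx] at e1
        omega
      exact ⟨⟨hrange, hIcc, hcx⟩, hKsx, h0, hoox, hoc⟩
    · right
      obtain ⟨u, hu, heu⟩ : ∃ u ∈ Ioc (2*K) (2*K+s), f^[u] x ∈ V := by
        by_contra hcon
        push_neg at hcon
        exact hoc (cnt_eq_zero.2 hcon)
      simp only [Finset.mem_Ioc] at hu
      exact to_badR hsK hcx hu.1 hu.2 heu
  · right
    obtain ⟨t, ht, het⟩ : ∃ t ∈ range s, f^[t] x ∈ V := by
      by_contra hcon
      push_neg at hcon
      exact h0 (cnt_eq_zero.2 hcon)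
    exact to_badL_or_R hs1 hsK hcx hKsx (Finset.mem_range.1 ht) het

end comb

section decomp
variable {M : Type*} {f : M → M} {V : Set M} {K ℓ k : ℕ}

lemma R_facts {s : ℕ} (hsK : s ≤ K) {x : M} (hx : f^[s] x ∈ Qset f V K ℓ k s) :
    f^[K+s] x ∈ V ∧ cnt f V (Ioo K (K+s)) x = 0 := by
  obtain ⟨⟨-, -, hcQ⟩, -, hooQ⟩ := hx
  constructor
  · rwa [← Function.iterate_add_apply] at hcQ
  · rw [cnt_shift, w7 hsK] at hooQ; exact hooQ

lemma R_disj {s s' : ℕ} (hs : s ∈ Icc 1 K) (hs' : s' ∈ Icc 1 K) (hne : s ≠ s') :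
    Disjoint (f^[s] ⁻¹' Qset f V K ℓ k s) (f^[s'] ⁻¹' Qset f V K ℓ k s') := by
  simp only [Finset.mem_Icc] at hs hs'
  rw [Set.disjoint_left]
  intro x hx hx'
  obtain ⟨he, hz⟩ := R_facts hs.2 hx
  obtain ⟨he', hz'⟩ := R_facts hs'.2 hx'
  rcases Nat.lt_or_ge s s' with h | h
  · exact (cnt_eq_zero.1 hz') (K+s) (Finset.mem_Ioo.2 (by omega)) he
  · have h' : s' < s := by omega
    exact (cnt_eq_zero.1 hz) (K+s') (Finset.mem_Ioo.2 (by omega)) he'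

lemma Q_disj {s s' : ℕ} (hs : s ∈ Icc 1 K) (hs' : s' ∈ Icc 1 K) (hne : s ≠ s') :
    Disjoint (Qset f V K ℓ k s) (Qset f V K ℓ k s') := by
  simp only [Finset.mem_Icc] at hs hs'
  rw [Set.disjoint_left]
  intro x hx hx'
  obtain ⟨-, he, hz⟩ := hx
  obtain ⟨-, he', hz'⟩ := hx'
  rcases Nat.lt_or_ge s s' with h | h
  · exact (cnt_eq_zero.1 hz') (K-s) (Finset.mem_Ioo.2 (by omega)) he
  · have h' : s' < s := by omega
    exact (cnt_eq_zero.1 hz) (K-s') (Finset.mem_Ioo.2 (by omega)) he'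

lemma B_eq_union_Q (hK : 1 ≤ K) :
    Bset f V K ℓ (k+1) = ⋃ s ∈ (Icc 1 K : Finset ℕ), Qset f V K ℓ k s := by
  ext x
  simp only [Set.mem_iUnion, exists_prop]
  constructor
  · intro hx
    have hxm := hx.1
    have hne : ((range K).filter (fun i => f^[i] x ∈ V)).Nonempty := by
      rw [← Finset.card_pos]
      show 0 < cnt f V (range K) x
      omega
    set F := (range K).filter (fun i => f^[i] x ∈ V) with hF
    have htm := F.max'_mem hne
    set t := F.max' hne with htdef
    have htK : t < K := Finset.mem_range.1 (Finset.mem_filter.1 htm).1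
    have het : f^[t] x ∈ V := (Finset.mem_filter.1 htm).2
    refine ⟨K - t, Finset.mem_Icc.2 ⟨by omega, by omega⟩, hx, ?_, ?_⟩
    · have : K - (K - t) = t := by omega
      rw [this]; exact het
    · rw [cnt_eq_zero]
      intro u hu heu
      have hu' := Finset.mem_Ioo.1 hu
      have : u ∈ F := Finset.mem_filter.2 ⟨Finset.mem_range.2 (by omega), heu⟩
      have := F.le_max' u this
      omega
  · rintro ⟨s, -, hx, -⟩
    exact hx

lemma cnt_le_card {M' : Type*} (f : M' → M') (V : Set M') (W : Finset ℕ) (x : M') :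
    cnt f V W x ≤ W.card := Finset.card_filter_le _ _

lemma B_subset_P_union_Bad (hkl : k + 2 ≤ ℓ) (hK : 1 ≤ K) :
    Bset f V K ℓ k ⊆ (⋃ s ∈ (Icc 1 K : Finset ℕ), Pset f V K ℓ k s) ∪ BadS f V K := by
  intro x hx
  obtain ⟨hm, hp, hc⟩ := hx
  -- there is an entry strictly after K in (K, 2K]
  have hsplit : Icc K (2*K) = {K} ∪ Ioc K (2*K) := by
    ext i
    simp only [Finset.mem_Icc, Finset.mem_union, Finset.mem_singleton, Finset.mem_Ioc]
    omega
  have hd : Disjoint ({K} : Finset ℕ) (Ioc K (2*K)) := by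
    simp [Finset.disjoint_left]
  have hcnt1 : cnt f V ({K} : Finset ℕ) x ≤ 1 := by
    have := cnt_le_card f V ({K} : Finset ℕ) x
    simpa using this
  have hIoc : 1 ≤ cnt f V (Ioc K (2*K)) x := by
    have := cnt_eq_of f V hsplit hd x
    omega
  obtain ⟨u, hu⟩ : ∃ u, u ∈ (Ioc K (2*K)).filter (fun i => f^[i] x ∈ V) := by
    have : 0 < cnt f V (Ioc K (2*K)) x := hIoc
    rw [cnt, Finset.card_pos] at this
    exact this
  have huI := Finset.mem_Ioc.1 (Finset.mem_filter.1 hu).1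
  have heu : f^[u] x ∈ V := (Finset.mem_filter.1 hu).2
  -- first return
  have hex : ∃ s, 1 ≤ s ∧ f^[K+s] x ∈ V := by
    refine ⟨u - K, by omega, ?_⟩
    have : K + (u - K) = u := by omega
    rw [this]; exact heu
  classical
  set s₀ := Nat.find hex with hs₀def
  obtain ⟨hs₀1, hes₀⟩ := Nat.find_spec hex
  have hs₀K : s₀ ≤ K := by
    have : s₀ ≤ u - K := Nat.find_le ⟨by omega, by
      have : K + (u - K) = u := by omega
      rw [this]; exact heu⟩
    omega
  have hoo : cnt f V (Ioo K (K+s₀)) x = 0 := by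
    rw [cnt_eq_zero]
    intro i hi hei
    have hi' := Finset.mem_Ioo.1 hi
    have : ¬ (1 ≤ i - K ∧ f^[K + (i-K)] x ∈ V) := Nat.find_min hex (by omega)
    push_neg at this
    have hik : K + (i - K) = i := by omega
    rw [hik] at this
    exact (this (by omega)) hei
  by_cases h0 : cnt f V (range s₀) x = 0
  · by_cases hoc : cnt f V (Ioc (2*K) (2*K+s₀)) x = 0
    · left
      simp only [Set.mem_iUnion, exists_prop]
      exact ⟨s₀, Finset.mem_Icc.2 ⟨hs₀1, hs₀K⟩, ⟨hm, hp, hc⟩, hes₀, h0, hoo, hoc⟩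
    · right
      obtain ⟨w, hw, hew⟩ : ∃ w ∈ Ioc (2*K) (2*K+s₀), f^[w] x ∈ V := by
        by_contra hcon; push_neg at hcon; exact hoc (cnt_eq_zero.2 hcon)
      have hw' := Finset.mem_Ioc.1 hw
      exact to_badR hs₀K hc hw'.1 hw'.2 hew
  · right
    obtain ⟨t, ht, het⟩ : ∃ t ∈ range s₀, f^[t] x ∈ V := by
      by_contra hcon; push_neg at hcon; exact h0 (cnt_eq_zero.2 hcon)
    exact to_badL_or_R hs₀1 hs₀K hc hes₀ (Finset.mem_range.1 ht) het

end decomp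

section meas
variable {M : Type*} [MeasurableSpace M] {f : M → M} {V : Set M}
variable (hfm : Measurable f) (hV : MeasurableSet V)
include hfm hV

lemma meas_ent (i : ℕ) : MeasurableSet {x | f^[i] x ∈ V} := (hfm.iterate i) hV

lemma meas_cnt_eq (W : Finset ℕ) (m : ℕ) : MeasurableSet {x | cnt f V W x = m} :=
  measurable_cnt hfm hV W (measurableSet_singleton m)

lemma meas_B (K ℓ k : ℕ) : MeasurableSet (Bset f V K ℓ k) :=
  ((meas_cnt_eq hfm hV _ _).inter ((meas_cnt_eq hfm hV _ _).inter (meas_ent hfm hV K)) : _)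

lemma meas_P (K ℓ k s : ℕ) : MeasurableSet (Pset f V K ℓ k s) :=
  (meas_B hfm hV K ℓ k).inter
    ((meas_ent hfm hV (K+s)).inter ((meas_cnt_eq hfm hV _ _).inter
      ((meas_cnt_eq hfm hV _ _).inter (meas_cnt_eq hfm hV _ _))))

lemma meas_Q (K ℓ k s : ℕ) : MeasurableSet (Qset f V K ℓ k s) :=
  (meas_B hfm hV K ℓ (k+1)).inter
    ((meas_ent hfm hV (K-s)).inter (meas_cnt_eq hfm hV _ _))

lemma meas_Bad (K : ℕ) : MeasurableSet (BadS f V K) := by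
  have h1 : {x : M | f^[K] x ∈ V ∧ ∃ g ∈ Icc (K/2+1) K, f^[K-g] x ∈ V}
      = {x | f^[K] x ∈ V} ∩ ⋃ g ∈ (Icc (K/2+1) K : Finset ℕ), {x | f^[K-g] x ∈ V} := by
    ext x; simp [Set.mem_iUnion]
  have h2 : {x : M | f^[K] x ∈ V ∧ ∃ g ∈ Icc (K/2+1) (2*K), f^[K+g] x ∈ V}
      = {x | f^[K] x ∈ V} ∩ ⋃ g ∈ (Icc (K/2+1) (2*K) : Finset ℕ), {x | f^[K+g] x ∈ V} := by
    ext x; simp [Set.mem_iUnion]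
  refine MeasurableSet.union ?_ ?_
  · rw [h1]
    exact (meas_ent hfm hV K).inter
      (Finset.measurableSet_biUnion _ fun g _ => meas_ent hfm hV (K-g))
  · rw [h2]
    exact (meas_ent hfm hV K).inter
      (Finset.measurableSet_biUnion _ fun g _ => meas_ent hfm hV (K+g))

end meas

section measure
open MeasureTheory
variable {M : Type*} [MeasurableSpace M] {μ : Measure M} {f : M → M} {V : Set M} {K ℓ k : ℕ}

lemma step_bound (hf : MeasurePreserving f μ μ) (hV : MeasurableSet V)
    (hkl : k + 2 ≤ ℓ) (hK : 1 ≤ K) :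
    μ (Bset f V K ℓ (k+1)) ≤ μ (Bset f V K ℓ k) + μ (BadS f V K) ∧
    μ (Bset f V K ℓ k) ≤ μ (Bset f V K ℓ (k+1)) + μ (BadS f V K) := by
  have hfm := hf.measurable
  -- μ B_{k+1} = ∑ μ Q_s = ∑ μ R_s
  have hBQ : μ (Bset f V K ℓ (k+1)) = ∑ s ∈ Icc 1 K, μ (Qset f V K ℓ k s) := by
    rw [B_eq_union_Q hK]
    exact measure_biUnion_finset (fun s hs s' hs' hne => Q_disj hs hs' hne)
      (fun s _ => meas_Q hfm hV K ℓ k s)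
  have hQR : ∀ s, μ (Qset f V K ℓ k s) = μ (f^[s] ⁻¹' Qset f V K ℓ k s) := fun s =>
    ((hf.iterate s).measure_preimage (meas_Q hfm hV K ℓ k s).nullMeasurableSet).symm
  have hBR : μ (Bset f V K ℓ (k+1)) = ∑ s ∈ Icc 1 K, μ (f^[s] ⁻¹' Qset f V K ℓ k s) := by
    rw [hBQ]; exact Finset.sum_congr rfl fun s _ => hQR s
  constructor
  · -- μ B_{k+1} ≤ μ B_k + μ Bad
    have h1 : ∀ s ∈ Icc 1 K, μ (f^[s] ⁻¹' Qset f V K ℓ k s) ≤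
        μ (Pset f V K ℓ k s) + μ ((f^[s] ⁻¹' Qset f V K ℓ k s) \ Pset f V K ℓ k s) := by
      intro s _
      calc μ (f^[s] ⁻¹' Qset f V K ℓ k s)
          ≤ μ (Pset f V K ℓ k s ∪ ((f^[s] ⁻¹' Qset f V K ℓ k s) \ Pset f V K ℓ k s)) :=
            measure_mono (fun x hx => by
              by_cases hxP : x ∈ Pset f V K ℓ k s
              · exact Or.inl hxP
              · exact Or.inr ⟨hx, hxP⟩)
        _ ≤ _ := measure_union_le _ _
    have h2 : ∑ s ∈ Icc 1 K, μ (Pset f V K ℓ k s) ≤ μ (Bset f V K ℓ k) := by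
      rw [← measure_biUnion_finset
        (fun s hs s' hs' hne => Set.disjoint_of_subset
          (fun x hx => P_mapsto_Q (Finset.mem_Icc.1 hs).1 (Finset.mem_Icc.1 hs).2 hkl hx)
          (fun x hx => P_mapsto_Q (Finset.mem_Icc.1 hs').1 (Finset.mem_Icc.1 hs').2 hkl hx)
          (R_disj hs hs' hne))
        (fun s _ => meas_P hfm hV K ℓ k s)]
      exact measure_mono (Set.iUnion₂_subset fun s _ => Set.inter_subset_left)
    have h3 : ∑ s ∈ Icc 1 K, μ ((f^[s] ⁻¹' Qset f V K ℓ k s) \ Pset f V K ℓ k s) ≤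
        μ (BadS f V K) := by
      rw [← measure_biUnion_finset
        (fun s hs s' hs' hne => Set.disjoint_of_subset Set.diff_subset Set.diff_subset
          (R_disj hs hs' hne))
        (fun s _ => ((hfm.iterate s) (meas_Q hfm hV K ℓ k s)).diff (meas_P hfm hV K ℓ k s))]
      refine measure_mono (Set.iUnion₂_subset fun s hs => fun x hx => ?_)
      have hs' := Finset.mem_Icc.1 hs
      rcases preQ_subset hs'.1 hs'.2 hkl hx.1 with h | h
      · exact absurd h hx.2
      · exact h
    calc μ (Bset f V K ℓ (k+1)) = ∑ s ∈ Icc 1 K, μ (f^[s] ⁻¹' Qset f V K ℓ k s) := hBR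
      _ ≤ ∑ s ∈ Icc 1 K, (μ (Pset f V K ℓ k s) +
            μ ((f^[s] ⁻¹' Qset f V K ℓ k s) \ Pset f V K ℓ k s)) := Finset.sum_le_sum h1
      _ = ∑ s ∈ Icc 1 K, μ (Pset f V K ℓ k s) +
            ∑ s ∈ Icc 1 K, μ ((f^[s] ⁻¹' Qset f V K ℓ k s) \ Pset f V K ℓ k s) :=
          Finset.sum_add_distrib
      _ ≤ μ (Bset f V K ℓ k) + μ (BadS f V K) := add_le_add h2 h3
  · -- μ B_k ≤ μ B_{k+1} + μ Bad
    calc μ (Bset f V K ℓ k)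
        ≤ μ ((⋃ s ∈ (Icc 1 K : Finset ℕ), Pset f V K ℓ k s) ∪ BadS f V K) :=
          measure_mono (B_subset_P_union_Bad hkl hK)
      _ ≤ μ (⋃ s ∈ (Icc 1 K : Finset ℕ), Pset f V K ℓ k s) + μ (BadS f V K) :=
          measure_union_le _ _
      _ ≤ ∑ s ∈ Icc 1 K, μ (Pset f V K ℓ k s) + μ (BadS f V K) := by
          gcongr
          exact measure_biUnion_finset_le _ _
      _ ≤ ∑ s ∈ Icc 1 K, μ (f^[s] ⁻¹' Qset f V K ℓ k s) + μ (BadS f V K) := by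
          gcongr with s hs
          · intro x hx
            have hs' := Finset.mem_Icc.1 hs
            exact P_mapsto_Q hs'.1 hs'.2 hkl hx
      _ = μ (Bset f V K ℓ (k+1)) + μ (BadS f V K) := by rw [hBR]

lemma bad_bound (hf : MeasurePreserving f μ μ) (hV : MeasurableSet V) :
    μ (BadS f V K) ≤ 2 * ∑ g ∈ Icc (K/2+1) (2*K), μ (V ∩ f^[g] ⁻¹' V) := by
  have hfm := hf.measurable
  have hL : μ {x : M | f^[K] x ∈ V ∧ ∃ g ∈ Icc (K/2+1) K, f^[K-g] x ∈ V} ≤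
      ∑ g ∈ Icc (K/2+1) K, μ (V ∩ f^[g] ⁻¹' V) := by
    have hsub : {x : M | f^[K] x ∈ V ∧ ∃ g ∈ Icc (K/2+1) K, f^[K-g] x ∈ V} ⊆
        ⋃ g ∈ (Icc (K/2+1) K : Finset ℕ), f^[K-g] ⁻¹' (V ∩ f^[g] ⁻¹' V) := by
      rintro x ⟨hc, g, hg, he⟩
      simp only [Set.mem_iUnion, exists_prop]
      refine ⟨g, hg, he, ?_⟩
      have hgK : g ≤ K := (Finset.mem_Icc.1 hg).2
      have : g + (K - g) = K := by omega
      show f^[g] (f^[K-g] x) ∈ V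
      rw [← Function.iterate_add_apply, this]
      exact hc
    calc μ _ ≤ μ (⋃ g ∈ (Icc (K/2+1) K : Finset ℕ), f^[K-g] ⁻¹' (V ∩ f^[g] ⁻¹' V)) :=
            measure_mono hsub
      _ ≤ ∑ g ∈ Icc (K/2+1) K, μ (f^[K-g] ⁻¹' (V ∩ f^[g] ⁻¹' V)) :=
            measure_biUnion_finset_le _ _
      _ = ∑ g ∈ Icc (K/2+1) K, μ (V ∩ f^[g] ⁻¹' V) :=
            Finset.sum_congr rfl fun g _ => (hf.iterate (K-g)).measure_preimage
              ((hV.inter ((hfm.iterate g) hV)).nullMeasurableSet)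
  have hR : μ {x : M | f^[K] x ∈ V ∧ ∃ g ∈ Icc (K/2+1) (2*K), f^[K+g] x ∈ V} ≤
      ∑ g ∈ Icc (K/2+1) (2*K), μ (V ∩ f^[g] ⁻¹' V) := by
    have hsub : {x : M | f^[K] x ∈ V ∧ ∃ g ∈ Icc (K/2+1) (2*K), f^[K+g] x ∈ V} ⊆
        ⋃ g ∈ (Icc (K/2+1) (2*K) : Finset ℕ), f^[K] ⁻¹' (V ∩ f^[g] ⁻¹' V) := by
      rintro x ⟨hc, g, hg, he⟩
      simp only [Set.mem_iUnion, exists_prop]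
      refine ⟨g, hg, hc, ?_⟩
      show f^[g] (f^[K] x) ∈ V
      rw [← Function.iterate_add_apply, Nat.add_comm g K]
      exact he
    calc μ _ ≤ μ (⋃ g ∈ (Icc (K/2+1) (2*K) : Finset ℕ), f^[K] ⁻¹' (V ∩ f^[g] ⁻¹' V)) :=
            measure_mono hsub
      _ ≤ ∑ g ∈ Icc (K/2+1) (2*K), μ (f^[K] ⁻¹' (V ∩ f^[g] ⁻¹' V)) :=
            measure_biUnion_finset_le _ _
      _ = ∑ g ∈ Icc (K/2+1) (2*K), μ (V ∩ f^[g] ⁻¹' V) :=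
            Finset.sum_congr rfl fun g _ => (hf.iterate K).measure_preimage
              ((hV.inter ((hfm.iterate g) hV)).nullMeasurableSet)
  have hun : μ (BadS f V K) ≤
      μ {x : M | f^[K] x ∈ V ∧ ∃ g ∈ Icc (K/2+1) K, f^[K-g] x ∈ V} +
      μ {x : M | f^[K] x ∈ V ∧ ∃ g ∈ Icc (K/2+1) (2*K), f^[K+g] x ∈ V} :=
    measure_union_le _ _
  have hsub : (Icc (K/2+1) K : Finset ℕ) ⊆ Icc (K/2+1) (2*K) :=
    Finset.Icc_subset_Icc_right (by omega)
  have hmono : ∑ g ∈ Icc (K/2+1) K, μ (V ∩ f^[g] ⁻¹' V) ≤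
      ∑ g ∈ Icc (K/2+1) (2*K), μ (V ∩ f^[g] ⁻¹' V) :=
    Finset.sum_le_sum_of_subset hsub
  calc μ (BadS f V K) ≤ _ := hun
    _ ≤ ∑ g ∈ Icc (K/2+1) K, μ (V ∩ f^[g] ⁻¹' V) +
        ∑ g ∈ Icc (K/2+1) (2*K), μ (V ∩ f^[g] ⁻¹' V) := add_le_add hL hR
    _ ≤ ∑ g ∈ Icc (K/2+1) (2*K), μ (V ∩ f^[g] ⁻¹' V) +
        ∑ g ∈ Icc (K/2+1) (2*K), μ (V ∩ f^[g] ⁻¹' V) := add_le_add hmono le_rfl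
    _ = 2 * ∑ g ∈ Icc (K/2+1) (2*K), μ (V ∩ f^[g] ⁻¹' V) := (two_mul _).symm

end measure

section layercake
open MeasureTheory
variable {M : Type*} [MeasurableSpace M] {μ : Measure M} {f : M → M} {V : Set M}

lemma filter_le_eq (r m : ℕ) (hrm : r ≤ m) :
    (Icc 1 m).filter (fun j => j ≤ r) = Icc 1 r := by
  ext j
  simp only [Finset.mem_filter, Finset.mem_Icc]
  omega

lemma sum_corr_eq_layer (hf : MeasurePreserving f μ μ) (hV : MeasurableSet V) (m : ℕ) :
    ∑ g ∈ Icc 1 m, μ (V ∩ f^[g] ⁻¹' V) =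
    ∑ j ∈ Icc 1 m, μ (V ∩ {x | j ≤ cnt f V (Icc 1 m) x}) := by
  have hfm := hf.measurable
  have hmeas1 : ∀ g : ℕ, MeasurableSet (V ∩ f^[g] ⁻¹' V) :=
    fun g => hV.inter ((hfm.iterate g) hV)
  have hmeas2 : ∀ j : ℕ, MeasurableSet (V ∩ {x | j ≤ cnt f V (Icc 1 m) x}) :=
    fun j => hV.inter (measurable_cnt hfm hV (Icc 1 m) measurableSet_Ici)
  have key : ∀ x : M,
      (∑ g ∈ Icc 1 m, (V ∩ f^[g] ⁻¹' V).indicator (fun _ => (1:ENNReal)) x) =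
      (∑ j ∈ Icc 1 m, (V ∩ {y | j ≤ cnt f V (Icc 1 m) y}).indicator (fun _ => (1:ENNReal)) x) := by
    intro x
    by_cases hxV : x ∈ V
    · have hL : (∑ g ∈ Icc 1 m, (V ∩ f^[g] ⁻¹' V).indicator (fun _ => (1:ENNReal)) x)
          = (cnt f V (Icc 1 m) x : ENNReal) := by
        rw [cnt, Finset.card_filter, Nat.cast_sum]
        refine Finset.sum_congr rfl fun g _ => ?_
        by_cases h : f^[g] x ∈ V <;>
          simp [Set.indicator_apply, Set.mem_inter_iff, hxV, h]
      have hR : (∑ j ∈ Icc 1 m, (V ∩ {y | j ≤ cnt f V (Icc 1 m) y}).indicator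
            (fun _ => (1:ENNReal)) x) = (cnt f V (Icc 1 m) x : ENNReal) := by
        have hcle : cnt f V (Icc 1 m) x ≤ m := by
          have := Finset.card_filter_le (Icc 1 m) (fun i => f^[i] x ∈ V)
          simpa [cnt, Nat.card_Icc] using this
        have : (∑ j ∈ Icc 1 m, (V ∩ {y | j ≤ cnt f V (Icc 1 m) y}).indicator
            (fun _ => (1:ENNReal)) x) =
            ((Icc 1 m).filter (fun j => j ≤ cnt f V (Icc 1 m) x)).card := by
          rw [Finset.card_filter, Nat.cast_sum]
          refine Finset.sum_congr rfl fun j _ => ?_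
          by_cases h : j ≤ cnt f V (Icc 1 m) x <;>
            simp [Set.indicator_apply, Set.mem_inter_iff, hxV, h, Set.mem_setOf_eq]
        rw [this, filter_le_eq _ _ hcle, Nat.card_Icc]
        simp
      rw [hL, hR]
    · have : ∀ (S : Set M), S ⊆ V → S.indicator (fun _ => (1:ENNReal)) x = 0 := by
        intro S hS
        exact Set.indicator_of_notMem (fun hx => hxV (hS hx)) _
      rw [Finset.sum_congr rfl fun g _ => this _ Set.inter_subset_left,
        Finset.sum_congr rfl fun j _ => this _ Set.inter_subset_left]
  calc ∑ g ∈ Icc 1 m, μ (V ∩ f^[g] ⁻¹' V)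
      = ∑ g ∈ Icc 1 m, ∫⁻ x, (V ∩ f^[g] ⁻¹' V).indicator (fun _ => (1:ENNReal)) x ∂μ := by
        refine Finset.sum_congr rfl fun g _ => ?_
        exact (lintegral_indicator_one (hmeas1 g)).symm
    _ = ∫⁻ x, ∑ g ∈ Icc 1 m, (V ∩ f^[g] ⁻¹' V).indicator (fun _ => (1:ENNReal)) x ∂μ :=
        (lintegral_finset_sum _ (fun g _ =>
          (measurable_const.indicator (hmeas1 g)))).symm
    _ = ∫⁻ x, ∑ j ∈ Icc 1 m, (V ∩ {y | j ≤ cnt f V (Icc 1 m) y}).indicator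
          (fun _ => (1:ENNReal)) x ∂μ := by
        refine lintegral_congr fun x => key x
    _ = ∑ j ∈ Icc 1 m, ∫⁻ x, (V ∩ {y | j ≤ cnt f V (Icc 1 m) y}).indicator
          (fun _ => (1:ENNReal)) x ∂μ :=
        lintegral_finset_sum _ (fun j _ => (measurable_const.indicator (hmeas2 j)))
    _ = ∑ j ∈ Icc 1 m, μ (V ∩ {x | j ≤ cnt f V (Icc 1 m) x}) := by
        refine Finset.sum_congr rfl fun j _ => ?_
        exact lintegral_indicator_one (hmeas2 j)

end layercake

section telescope
open MeasureTheory
variable {M : Type*} [MeasurableSpace M] {μ : Measure M} [IsFiniteMeasure μ]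
  {f : M → M} {V : Set M} {K ℓ : ℕ}

lemma abs_step (hf : MeasurePreserving f μ μ) (hV : MeasurableSet V) {k : ℕ}
    (hkl : k + 2 ≤ ℓ) (hK : 1 ≤ K) :
    |(μ (Bset f V K ℓ (k+1))).toReal - (μ (Bset f V K ℓ k)).toReal| ≤
      (μ (BadS f V K)).toReal := by
  obtain ⟨h1, h2⟩ := step_bound hf hV hkl hK
  have e1 : (μ (Bset f V K ℓ (k+1))).toReal ≤
      (μ (Bset f V K ℓ k)).toReal + (μ (BadS f V K)).toReal := by
    rw [← ENNReal.toReal_add (measure_ne_top μ _) (measure_ne_top μ _)]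
    exact ENNReal.toReal_mono (by finiteness) h1
  have e2 : (μ (Bset f V K ℓ k)).toReal ≤
      (μ (Bset f V K ℓ (k+1))).toReal + (μ (BadS f V K)).toReal := by
    rw [← ENNReal.toReal_add (measure_ne_top μ _) (measure_ne_top μ _)]
    exact ENNReal.toReal_mono (by finiteness) h2
  rw [abs_sub_le_iff]
  constructor <;> linarith

lemma abs_telescope (hf : MeasurePreserving f μ μ) (hV : MeasurableSet V) (hK : 1 ≤ K)
    {k : ℕ} (hk : k < ℓ) :
    |(μ (Bset f V K ℓ k)).toReal - (μ (Bset f V K ℓ 0)).toReal| ≤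
      (k : ℝ) * (μ (BadS f V K)).toReal := by
  induction k with
  | zero => simp
  | succ j ih =>
    have hj : j < ℓ := by omega
    have hstep := abs_step hf hV (show j + 2 ≤ ℓ by omega) hK
    have := ih hj
    have htri := abs_sub_le ((μ (Bset f V K ℓ (j+1))).toReal)
      ((μ (Bset f V K ℓ j)).toReal) ((μ (Bset f V K ℓ 0)).toReal)
    push_cast
    linarith

lemma abs_pair (hf : MeasurePreserving f μ μ) (hV : MeasurableSet V) (hK : 1 ≤ K)
    {k k' : ℕ} (hk : k < ℓ) (hk' : k' < ℓ) :
    |(μ (Bset f V K ℓ k)).toReal - (μ (Bset f V K ℓ k')).toReal| ≤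
      (2 * ℓ : ℝ) * (μ (BadS f V K)).toReal := by
  have h1 := abs_telescope hf hV hK hk
  have h2 := abs_telescope hf hV hK hk'
  have htri := abs_sub_le ((μ (Bset f V K ℓ k)).toReal)
    ((μ (Bset f V K ℓ 0)).toReal) ((μ (Bset f V K ℓ k')).toReal)
  rw [abs_sub_comm] at h2
  have hc : (0:ℝ) ≤ (μ (BadS f V K)).toReal := ENNReal.toReal_nonneg
  have hkc : (k:ℝ) ≤ ℓ := by exact_mod_cast hk.le
  have hkc' : (k':ℝ) ≤ ℓ := by exact_mod_cast hk'.le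
  nlinarith

end telescope


section bridge
open MeasureTheory
variable {M : Type*} (f : M → M) (V : Set M)

lemma cnt_indicator (W : Finset ℕ) (x : M) :
    ∑ i ∈ W, V.indicator (fun _ => 1) (f^[i] x) = cnt f V W x := by
  rw [cnt, Finset.card_filter]
  refine Finset.sum_congr rfl fun i _ => ?_
  by_cases h : f^[i] x ∈ V <;> simp [Set.indicator_apply, h]

lemma retCount_eq (m : ℕ) (x : M) : retCount f V m x = cnt f V (Icc 1 m) x :=
  cnt_indicator f V (Icc 1 m) x

lemma Zminus_eq (K : ℕ) (x : M) : Zminus f V K x = cnt f V (range K) x :=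
  cnt_indicator f V (range K) x

lemma Zplus_eq (K : ℕ) (x : M) : Zplus f V K x = cnt f V (Icc K (2*K)) x :=
  cnt_indicator f V (Icc K (2*K)) x

variable [MeasurableSpace M] (μ : Measure M)

lemma condRet_eq_layer (m j : ℕ) (h0 : μ V ≠ 0) (ht : μ V ≠ ⊤) :
    (μ (V ∩ {x | j ≤ cnt f V (Icc 1 m) x})).toReal = condRet μ f V m (j+1) * (μ V).toReal := by
  have hset : {x : M | (j+1) - 1 ≤ retCount f V m x} = {x | j ≤ cnt f V (Icc 1 m) x} := by
    ext x; simp [retCount_eq]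
  rw [condRet, hset, div_mul_cancel₀]
  exact ENNReal.toReal_ne_zero.2 ⟨h0, ht⟩

lemma condRet_nonneg (m j : ℕ) : 0 ≤ condRet μ f V m j :=
  div_nonneg ENNReal.toReal_nonneg ENNReal.toReal_nonneg

lemma condRet_mono [IsFiniteMeasure μ] (hfm : Measurable f) (hV : MeasurableSet V)
    (j : ℕ) {m m' : ℕ} (h : m ≤ m') : condRet μ f V m j ≤ condRet μ f V m' j := by
  unfold condRet
  rcases eq_or_lt_of_le (ENNReal.toReal_nonneg (a := μ V)) with h0 | h0
  · rw [← h0, div_zero, div_zero]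
  · rw [div_le_div_iff_of_pos_right h0]
    refine ENNReal.toReal_mono (measure_ne_top μ _) (measure_mono ?_)
    refine Set.inter_subset_inter_right _ ?_
    intro x hx
    have hmono : retCount f V m x ≤ retCount f V m' x := by
      rw [retCount_eq, retCount_eq]
      exact Finset.card_le_card
        (Finset.filter_subset_filter _ (Finset.Icc_subset_Icc_right h))
    exact le_trans hx hmono

end bridge

lemma sum_Icc_le_tsum_tail {g : ℕ → ℝ} (hg0 : ∀ i, 0 ≤ g i) (hgs : Summable g) (a b : ℕ) :
    ∑ j ∈ Icc a b, g j ≤ ∑' i, g (i + a) := by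
  have hs' : Summable (fun i => g (i + a)) := (summable_nat_add_iff a).2 hgs
  have h1 : ∑ j ∈ Icc a b, g j = ∑ i ∈ range (b + 1 - a), g (a + i) := by
    rw [← Finset.Ico_add_one_right_eq_Icc, Finset.sum_Ico_eq_sum_range]
  rw [h1]
  calc ∑ i ∈ range (b+1-a), g (a+i) = ∑ i ∈ range (b+1-a), g (i+a) := by
        refine Finset.sum_congr rfl fun i _ => by rw [Nat.add_comm]
    _ ≤ ∑' i, g (i + a) := Summable.sum_le_tsum _ (fun i _ => hg0 _) hs'

open MeasureTheory


set_option maxHeartbeats 1000000 in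
/-- Conditioned on an entry at the center time `K` of a cluster of
length `2K+1`, the probability of a given split of the `ℓ` entries is nearly independent
of the split: the measures of the events `{Z^{K,-} = k, Z^{K,+} = ℓ-k, f^K x ∈ U_n}` for
different `k, k' < ℓ` differ by at most `η·μ(U_n)` for `K` and `n` large. -/
theorem cluster_split_near_invariance
    {M : Type*} [MeasurableSpace M] (μ : Measure M) [IsProbabilityMeasure μ]
    (f : M → M) (hf : MeasurePreserving f μ μ)
    (U : ℕ → Set M) (hmeas : ∀ n, MeasurableSet (U n))
    (hnested : ∀ n, U (n + 1) ⊆ U n) (hpos : ∀ n, 0 < μ (U n))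
    (hto0 : Tendsto (fun n => μ (U n)) atTop (nhds 0))
    (K₀ : ℕ) (A : ℕ → ℕ → ℝ)
    (hA : ∀ ℓ, 1 ≤ ℓ → ∀ K, K₀ ≤ K →
        Tendsto (fun n => condRet μ f (U n) K ℓ) atTop (nhds (A ℓ K)))
    (hatα : ℕ → ℝ)
    (hhatα : ∀ ℓ, 1 ≤ ℓ → Tendsto (fun K => A ℓ K) atTop (nhds (hatα ℓ)))
    (hsum : Summable (fun ℓ : ℕ => (ℓ : ℝ) * hatα ℓ)) :
    ∀ η : ℝ, 0 < η → ∀ ℓ : ℕ, 1 ≤ ℓ → ∃ Kc : ℕ, ∀ K, Kc ≤ K → ∃ n₀, ∀ n ≥ n₀,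
      ∀ k k' : ℕ, k < ℓ → k' < ℓ →
        |(μ {x | Zminus f (U n) K x = k ∧ Zplus f (U n) K x = ℓ - k ∧ f^[K] x ∈ U n}).toReal -
          (μ {x | Zminus f (U n) K x = k' ∧ Zplus f (U n) K x = ℓ - k' ∧ f^[K] x ∈ U n}).toReal|
        ≤ η * (μ (U n)).toReal := by
  intro η hη ℓ hℓ
  classical
  have hfm := hf.measurable
  have hℓr : (1:ℝ) ≤ ℓ := by exact_mod_cast hℓ
  set ε : ℝ := η / (8 * ℓ) with hεdef
  have h8ℓ : (0:ℝ) < 8 * ℓ := by linarith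
  have hε : 0 < ε := div_pos hη h8ℓ
  -- monotonicity and basic facts about A and hatα
  have hcmono : ∀ n (j : ℕ) {m m' : ℕ}, m ≤ m' →
      condRet μ f (U n) m j ≤ condRet μ f (U n) m' j :=
    fun n j {m m'} h => condRet_mono f (U n) μ hfm (hmeas n) j h
  have hAmono : ∀ j, 1 ≤ j → ∀ m m', K₀ ≤ m → m ≤ m' → A j m ≤ A j m' := by
    intro j h1 m m' hm hmm'
    exact le_of_tendsto_of_tendsto' (hA j h1 m hm) (hA j h1 m' (hm.trans hmm'))
      (fun n => hcmono n j hmm')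
  have hAnonneg : ∀ j, 1 ≤ j → ∀ m, K₀ ≤ m → 0 ≤ A j m := fun j h1 m hm =>
    ge_of_tendsto' (hA j h1 m hm) (fun n => condRet_nonneg f (U n) μ m j)
  have hAle : ∀ j, 1 ≤ j → ∀ m, K₀ ≤ m → A j m ≤ hatα j := by
    intro j h1 m hm
    refine ge_of_tendsto (hhatα j h1) ?_
    filter_upwards [eventually_ge_atTop m] with m' hm'
    exact hAmono j h1 m m' hm hm'
  have hhat0 : ∀ j, 1 ≤ j → 0 ≤ hatα j := by
    intro j h1
    refine ge_of_tendsto (hhatα j h1) ?_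
    filter_upwards [eventually_ge_atTop K₀] with m hm
    exact hAnonneg j h1 m hm
  set g : ℕ → ℝ := fun i => hatα (i+1) with hgdef
  have hg0 : ∀ i, 0 ≤ g i := fun i => hhat0 (i+1) (by omega)
  have hgs : Summable g := by
    have h1 : Summable (fun i : ℕ => ((i+1 : ℕ) : ℝ) * hatα (i+1)) :=
      (summable_nat_add_iff 1).2 hsum
    refine Summable.of_nonneg_of_le hg0 (fun i => ?_) h1
    have hi1 : (1:ℝ) ≤ ((i+1 : ℕ) : ℝ) := by exact_mod_cast Nat.succ_le_succ (Nat.zero_le i)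
    have := hg0 i
    nlinarith
  have htail : Tendsto (fun N => ∑' i, g (i + N)) atTop (nhds 0) := tendsto_sum_nat_add g
  obtain ⟨N₁, hN₁⟩ : ∃ N₁, ∀ N ≥ N₁, ∑' i, g (i + N) < ε/4 :=
    eventually_atTop.1 (htail.eventually_lt_const (by linarith))
  have hfinpart : Tendsto (fun m => ∑ j ∈ Icc 1 N₁, (hatα (j+1) - A (j+1) m)) atTop
      (nhds 0) := by
    have h := tendsto_finset_sum (f := fun j m => hatα (j+1) - A (j+1) m)
      (Icc 1 N₁) (fun j _ => tendsto_const_nhds.sub (hhatα (j+1) (by omega)))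
    simpa using h
  obtain ⟨m₂, hm₂⟩ : ∃ m₂, ∀ m ≥ m₂, ∑ j ∈ Icc 1 N₁, (hatα (j+1) - A (j+1) m) < ε/4 :=
    eventually_atTop.1 (hfinpart.eventually_lt_const (by linarith))
  set R := max (max N₁ m₂) (max K₀ 1) with hRdef
  have hR1 : N₁ ≤ R := le_trans (le_max_left _ _) (le_max_left _ _)
  have hR2 : m₂ ≤ R := le_trans (le_max_right _ _) (le_max_left _ _)
  have hR3 : K₀ ≤ R := le_trans (le_max_left _ _) (le_max_right _ _)
  have hR4 : 1 ≤ R := le_trans (le_max_right _ _) (le_max_right _ _)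
  refine ⟨2*R + 2, ?_⟩
  intro K hK
  set κ := K / 2 with hκdef
  have hκR : R + 1 ≤ κ := by omega
  have hκK₀ : K₀ ≤ κ := by omega
  have hκK : κ ≤ K := by omega
  have hK1 : 1 ≤ K := by omega
  have h2K : K₀ ≤ 2*K := by omega
  have hsplit2K : (Icc 1 (2*K) : Finset ℕ) = Icc 1 κ ∪ Icc (κ+1) (2*K) := by
    ext i
    simp only [Finset.mem_Icc, Finset.mem_union]
    omega
  have hdisj2K : Disjoint (Icc 1 κ : Finset ℕ) (Icc (κ+1) (2*K)) := by
    simp only [Finset.disjoint_left, Finset.mem_Icc]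
    omega
  -- the limit bound
  have hGbound : (∑ j ∈ Icc 1 (2*K), A (j+1) (2*K)) - (∑ j ∈ Icc 1 κ, A (j+1) κ) ≤
      3*ε/4 := by
    have hb1 : ∑ j ∈ Icc 1 (2*K), A (j+1) (2*K) ≤ ∑ j ∈ Icc 1 (2*K), g j :=
      Finset.sum_le_sum (fun j _ => hAle (j+1) (by omega) (2*K) h2K)
    have hb2 : ∑ j ∈ Icc 1 (2*K), g j = ∑ j ∈ Icc 1 κ, g j + ∑ j ∈ Icc (κ+1) (2*K), g j := by
      rw [hsplit2K, Finset.sum_union hdisj2K]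
    have hb3 : ∑ j ∈ Icc (κ+1) (2*K), g j ≤ ∑' i, g (i + (κ+1)) :=
      sum_Icc_le_tsum_tail hg0 hgs _ _
    have hb4 : ∑' i, g (i + (κ+1)) < ε/4 := hN₁ (κ+1) (by omega)
    have hsplitκ : (Icc 1 κ : Finset ℕ) = Icc 1 N₁ ∪ Icc (N₁+1) κ := by
      ext i
      simp only [Finset.mem_Icc, Finset.mem_union]
      omega
    have hdisjκ : Disjoint (Icc 1 N₁ : Finset ℕ) (Icc (N₁+1) κ) := by
      simp only [Finset.disjoint_left, Finset.mem_Icc]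
      omega
    have hb5 : ∑ j ∈ Icc 1 κ, (g j - A (j+1) κ) < ε/4 + ε/4 := by
      rw [hsplitκ, Finset.sum_union hdisjκ]
      have hfirst : ∑ j ∈ Icc 1 N₁, (g j - A (j+1) κ) < ε/4 := hm₂ κ (by omega)
      have hsecond : ∑ j ∈ Icc (N₁+1) κ, (g j - A (j+1) κ) ≤ ∑ j ∈ Icc (N₁+1) κ, g j :=
        Finset.sum_le_sum (fun j _ => by
          have := hAnonneg (j+1) (by omega) κ hκK₀
          linarith)
      have hthird : ∑ j ∈ Icc (N₁+1) κ, g j ≤ ∑' i, g (i + (N₁+1)) :=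
        sum_Icc_le_tsum_tail hg0 hgs _ _
      have hfourth : ∑' i, g (i + (N₁+1)) < ε/4 := hN₁ (N₁+1) (by omega)
      linarith
    have hb6 : ∑ j ∈ Icc 1 κ, (g j - A (j+1) κ) =
        ∑ j ∈ Icc 1 κ, g j - ∑ j ∈ Icc 1 κ, A (j+1) κ := Finset.sum_sub_distrib _ _
    linarith
  -- convergence in n
  have hFt : Tendsto (fun n => (∑ j ∈ Icc 1 (2*K), condRet μ f (U n) (2*K) (j+1)) -
      (∑ j ∈ Icc 1 κ, condRet μ f (U n) κ (j+1))) atTop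
      (nhds ((∑ j ∈ Icc 1 (2*K), A (j+1) (2*K)) - (∑ j ∈ Icc 1 κ, A (j+1) κ))) :=
    (tendsto_finset_sum _ (fun j _ => hA (j+1) (by omega) (2*K) h2K)).sub
      (tendsto_finset_sum _ (fun j _ => hA (j+1) (by omega) κ hκK₀))
  obtain ⟨n₀, hn₀⟩ : ∃ n₀, ∀ n ≥ n₀,
      (∑ j ∈ Icc 1 (2*K), condRet μ f (U n) (2*K) (j+1)) -
      (∑ j ∈ Icc 1 κ, condRet μ f (U n) κ (j+1)) < ε :=
    eventually_atTop.1 (hFt.eventually_lt_const (by linarith))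
  refine ⟨n₀, ?_⟩
  intro n hn k k' hk hk'
  have hV := hmeas n
  have hV0 : μ (U n) ≠ 0 := (hpos n).ne'
  have hVt : μ (U n) ≠ ⊤ := measure_ne_top μ _
  -- identify the statement's sets with Bset
  have hBid : ∀ j : ℕ,
      {x | Zminus f (U n) K x = j ∧ Zplus f (U n) K x = ℓ - j ∧ f^[K] x ∈ U n} =
      Bset f (U n) K ℓ j := by
    intro j
    ext x
    simp only [Set.mem_setOf_eq, Bset, Zminus_eq, Zplus_eq]
  rw [hBid k, hBid k']
  -- bound the correlation sum
  have hEq : ∀ m : ℕ, (∑ i ∈ Icc 1 m, μ (U n ∩ f^[i] ⁻¹' (U n))).toReal =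
      (∑ j ∈ Icc 1 m, condRet μ f (U n) m (j+1)) * (μ (U n)).toReal := by
    intro m
    rw [sum_corr_eq_layer hf hV m, ENNReal.toReal_sum (fun j _ => measure_ne_top μ _)]
    rw [Finset.sum_mul]
    exact Finset.sum_congr rfl fun j _ => condRet_eq_layer f (U n) μ m j hV0 hVt
  have hDsplit : (∑ i ∈ Icc 1 (2*K), μ (U n ∩ f^[i] ⁻¹' (U n))).toReal =
      (∑ i ∈ Icc 1 κ, μ (U n ∩ f^[i] ⁻¹' (U n))).toReal +
      (∑ i ∈ Icc (κ+1) (2*K), μ (U n ∩ f^[i] ⁻¹' (U n))).toReal := by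
    rw [hsplit2K, Finset.sum_union hdisj2K, ENNReal.toReal_add]
    · exact ENNReal.sum_ne_top.2 (fun i _ => measure_ne_top μ _)
    · exact ENNReal.sum_ne_top.2 (fun i _ => measure_ne_top μ _)
  have hμ0r : (0:ℝ) ≤ (μ (U n)).toReal := ENNReal.toReal_nonneg
  have hDle : (∑ i ∈ Icc (κ+1) (2*K), μ (U n ∩ f^[i] ⁻¹' (U n))).toReal ≤
      ε * (μ (U n)).toReal := by
    have h1 := hEq (2*K)
    have h2 := hEq κ
    have h3 := hn₀ n hn
    nlinarith [hDsplit]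
  -- bad set bound in ℝ
  have hBadR : (μ (BadS f (U n) K)).toReal ≤ 2 * (ε * (μ (U n)).toReal) := by
    have h1 := bad_bound (μ := μ) (V := U n) (K := K) hf hV
    have h2 : (μ (BadS f (U n) K)).toReal ≤
        (2 * ∑ i ∈ Icc (K/2+1) (2*K), μ (U n ∩ f^[i] ⁻¹' (U n))).toReal := by
      refine ENNReal.toReal_mono ?_ h1
      refine ENNReal.mul_ne_top (by simp) ?_
      exact ENNReal.sum_ne_top.2 (fun i _ => measure_ne_top μ _)
    rw [ENNReal.toReal_mul] at h2
    have h3 : ((2:ENNReal)).toReal = 2 := by simp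
    rw [h3] at h2
    have hKκ : K/2 + 1 = κ + 1 := rfl
    rw [hKκ] at h2
    calc (μ (BadS f (U n) K)).toReal ≤
        2 * (∑ i ∈ Icc (κ+1) (2*K), μ (U n ∩ f^[i] ⁻¹' (U n))).toReal := h2
      _ ≤ 2 * (ε * (μ (U n)).toReal) := by linarith
  -- final combination
  have hpair := abs_pair (μ := μ) (ℓ := ℓ) hf hV hK1 hk hk'
  have hεval : 8 * (ℓ:ℝ) * ε = η := by
    rw [hεdef]
    field_simp
  have hBadnn : (0:ℝ) ≤ (μ (BadS f (U n) K)).toReal := ENNReal.toReal_nonneg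
  calc |(μ (Bset f (U n) K ℓ k)).toReal - (μ (Bset f (U n) K ℓ k')).toReal|
      ≤ (2 * ℓ : ℝ) * (μ (BadS f (U n) K)).toReal := hpair
    _ ≤ (2 * ℓ : ℝ) * (2 * (ε * (μ (U n)).toReal)) := by nlinarith
    _ ≤ η * (μ (U n)).toReal := by nlinarith
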